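/- Let (F_i)_{i=1..k} be continuous self-maps of a compact metric space M and ν a probability measure on M invariant for the Markov operator of some QIFS with probabilities pᵢ (Σpᵢ = 1 pointwise). Define h₀(ν) = inf over bounded positive measurable f of ∫ log(Σᵢ f(F_i(x))/f(x)) dν(x). Then 0 ≤ h₀(ν) ≤ log k. -/

import Mathlib

open MeasureTheory Filter

section aux
variable {M : Type*} [MeasurableSpace M]

lemma integ_of_bdd (ν : Measure M) [IsFiniteMeasure ν] {g : M → ℝ}
    (hg : Measurable g) {c : ℝ} (h : ∀ x, |g x| ≤ c) : Integrable g ν :=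
  ⟨hg.aestronglyMeasurable, HasFiniteIntegral.of_bounded (C := c) (Eventually.of_forall h)⟩

lemma abs_log_le {m t C : ℝ} (hm : 0 < m) (h1 : m ≤ t) (h2 : t ≤ C) :
    |Real.log t| ≤ |Real.log m| + |Real.log C| := by
  have ht : 0 < t := lt_of_lt_of_le hm h1
  have l1 : Real.log m ≤ Real.log t := Real.log_le_log hm h1
  have l2 : Real.log t ≤ Real.log C := Real.log_le_log ht h2
  rw [abs_le]
  constructor
  · have := neg_abs_le (Real.log m); have := abs_nonneg (Real.log C); linarith
  · have := le_abs_self (Real.log C); have := abs_nonneg (Real.log m); linarith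

lemma jensen_log {k : ℕ} {w a : Fin k → ℝ} (hw0 : ∀ i, 0 ≤ w i)
    (hw1 : ∀ i, w i ≤ 1) (hws : ∑ i, w i = 1) (ha : ∀ i, 0 < a i) :
    ∑ i, w i * Real.log (a i) ≤ Real.log (∑ i, a i) := by
  have h1 : ∑ i, w i * Real.log (a i) ≤ Real.log (∑ i, w i * a i) := by
    have := strictConcaveOn_log_Ioi.concaveOn.le_map_sum (t := Finset.univ)
      (w := w) (p := a) (fun i _ => hw0 i) hws (fun i _ => ha i)
    simpa [smul_eq_mul] using this
  have hpos : 0 < ∑ i, w i * a i := by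
    obtain ⟨j, hj⟩ : ∃ j, 0 < w j := by
      by_contra hcon
      push_neg at hcon
      have : ∑ i, w i = 0 := Finset.sum_eq_zero fun i _ => le_antisymm (hcon i) (hw0 i)
      rw [this] at hws; norm_num at hws
    exact lt_of_lt_of_le (mul_pos hj (ha j))
      (Finset.single_le_sum (fun i _ => mul_nonneg (hw0 i) (ha i).le) (Finset.mem_univ j))
  have h2 : Real.log (∑ i, w i * a i) ≤ Real.log (∑ i, a i) :=
    Real.log_le_log hpos (Finset.sum_le_sum fun i _ => mul_le_of_le_one_left (ha i).le (hw1 i))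
  linarith

lemma invariance {k : ℕ} (F : Fin k → M → M) (hF : ∀ i, Measurable (F i))
    (p : Fin k → M → ℝ) (hpm : ∀ i, Measurable (p i))
    (hp0 : ∀ i x, 0 ≤ p i x) (hp1 : ∀ i x, p i x ≤ 1)
    (ν : Measure M) [IsProbabilityMeasure ν]
    (hinv : ∀ B : Set M, MeasurableSet B →
      (ν B).toReal = ∑ i, ∫ x in (F i) ⁻¹' B, p i x ∂ν)
    {g : M → ℝ} (hg : Measurable g) {c : ℝ} (hb : ∀ x, |g x| ≤ c) :
    ∫ x, g x ∂ν = ∑ i, ∫ x, p i x * g (F i x) ∂ν := by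
  set μs : Fin k → Measure M :=
    fun i => (ν.withDensity fun x => ENNReal.ofReal (p i x)).map (F i) with hμs
  have hμ : (∑ i, μs i) = ν := by
    ext B hB
    rw [Measure.finset_sum_apply]
    have key : ∀ i, μs i B = ENNReal.ofReal (∫ x in (F i) ⁻¹' B, p i x ∂ν) := by
      intro i
      rw [hμs]
      simp only
      rw [Measure.map_apply (hF i) hB, withDensity_apply _ ((hF i) hB),
        ← ofReal_integral_eq_lintegral_ofReal]
      · exact (integ_of_bdd ν (hpm i) (c := 1)
          (fun x => abs_le.2 ⟨by linarith [hp0 i x], hp1 i x⟩)).integrableOn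
      · exact Eventually.of_forall (fun x => hp0 i x)
    simp_rw [key]
    rw [← ENNReal.ofReal_sum_of_nonneg
      (fun i _ => setIntegral_nonneg ((hF i) hB) fun x _ => hp0 i x),
      ← hinv B hB, ENNReal.ofReal_toReal (measure_ne_top ν B)]
  have hgi : Integrable g ν := integ_of_bdd ν hg hb
  have hgi' : ∀ i, Integrable g (μs i) := by
    rw [← hμ] at hgi
    exact fun i => (integrable_finset_sum_measure.mp hgi) i (Finset.mem_univ i)
  calc ∫ x, g x ∂ν = ∫ x, g x ∂(∑ i, μs i) := by rw [hμ]
    _ = ∑ i, ∫ x, g x ∂(μs i) := integral_finset_sum_measure (fun i _ => hgi' i)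
    _ = ∑ i, ∫ x, p i x * g (F i x) ∂ν := by
        refine Finset.sum_congr rfl fun i _ => ?_
        rw [hμs]
        simp only
        rw [integral_map (hF i).aemeasurable hg.aestronglyMeasurable]
        have hd : (fun x => ENNReal.ofReal (p i x))
            = fun x => (((p i x).toNNReal : NNReal) : ENNReal) := rfl
        rw [hd, integral_withDensity_eq_integral_smul (hpm i).real_toNNReal]
        refine integral_congr_ae (Eventually.of_forall fun x => ?_)
        simp [NNReal.smul_def, Real.coe_toNNReal _ (hp0 i x)]

lemma key_nonneg {k : ℕ} (hk : 0 < k) (F : Fin k → M → M) (hF : ∀ i, Measurable (F i))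
    (p : Fin k → M → ℝ) (hpm : ∀ i, Measurable (p i))
    (hp0 : ∀ i x, 0 ≤ p i x) (hp1 : ∀ i x, p i x ≤ 1)
    (hpsum : ∀ x, ∑ i, p i x = 1)
    (ν : Measure M) [IsProbabilityMeasure ν]
    (hinv : ∀ B : Set M, MeasurableSet B →
      (ν B).toReal = ∑ i, ∫ x in (F i) ⁻¹' B, p i x ∂ν)
    {f : M → ℝ} (hfm : Measurable f) {ε C : ℝ} (hε : 0 < ε)
    (hfl : ∀ x, ε ≤ f x) (hfu : ∀ x, f x ≤ C) :
    0 ≤ ∫ x, Real.log ((∑ i, f (F i x)) / f x) ∂ν := by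
  have hεC : ε ≤ C := le_trans (hfl (Classical.choice (by
      by_contra hne
      have h1 := measure_univ (μ := ν)
      rw [Set.univ_eq_empty_iff.2 (not_nonempty_iff.1 hne), measure_empty] at h1
      exact zero_ne_one h1))) (hfu _)
  have hC : 0 < C := lt_of_lt_of_le hε hεC
  have hfin : Nonempty (Fin k) := ⟨⟨0, hk⟩⟩
  have fpos : ∀ x, 0 < f x := fun x => lt_of_lt_of_le hε (hfl x)
  set A : M → ℝ := fun x => Real.log (∑ i, f (F i x)) with hA
  set B : M → ℝ := fun x => Real.log (f x) with hB
  have hsumlb : ∀ x, (k : ℝ) * ε ≤ ∑ i, f (F i x) := by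
    intro x
    calc (k : ℝ) * ε = ∑ _i : Fin k, ε := by
          simp [Finset.sum_const, Finset.card_univ, nsmul_eq_mul]
      _ ≤ ∑ i, f (F i x) := Finset.sum_le_sum fun i _ => hfl _
  have hsumub : ∀ x, ∑ i, f (F i x) ≤ (k : ℝ) * C := by
    intro x
    calc ∑ i, f (F i x) ≤ ∑ _i : Fin k, C := Finset.sum_le_sum fun i _ => hfu _
      _ = (k : ℝ) * C := by simp [Finset.sum_const, Finset.card_univ, nsmul_eq_mul]
  have hkε : 0 < (k : ℝ) * ε := mul_pos (by exact_mod_cast hk) hε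
  have spos : ∀ x, 0 < ∑ i, f (F i x) := fun x => lt_of_lt_of_le hkε (hsumlb x)
  have hAm : Measurable A := (Finset.measurable_sum Finset.univ
    (fun i _ => hfm.comp (hF i))).log
  have hBm : Measurable B := hfm.log
  have hAb : ∀ x, |A x| ≤ |Real.log ((k:ℝ)*ε)| + |Real.log ((k:ℝ)*C)| :=
    fun x => abs_log_le hkε (hsumlb x) (hsumub x)
  have hBb : ∀ x, |B x| ≤ |Real.log ε| + |Real.log C| :=
    fun x => abs_log_le hε (hfl x) (hfu x)
  have intA : Integrable A ν := integ_of_bdd ν hAm hAb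
  have intB : Integrable B ν := integ_of_bdd ν hBm hBb
  have heq : (fun x => Real.log ((∑ i, f (F i x)) / f x)) = fun x => A x - B x := by
    funext x
    rw [hA, hB]
    exact Real.log_div (spos x).ne' (fpos x).ne'
  rw [heq, integral_sub intA intB]
  -- the middle function
  set G : M → ℝ := fun x => ∑ i, p i x * Real.log (f (F i x)) with hG
  have hGm : Measurable G := Finset.measurable_sum Finset.univ
    (fun i _ => (hpm i).mul (hfm.comp (hF i)).log)
  have hGb : ∀ x, |G x| ≤ (k : ℝ) * (|Real.log ε| + |Real.log C|) := by
    intro x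
    calc |G x| ≤ ∑ i, |p i x * Real.log (f (F i x))| := Finset.abs_sum_le_sum_abs _ _
      _ ≤ ∑ _i : Fin k, (|Real.log ε| + |Real.log C|) := by
          refine Finset.sum_le_sum fun i _ => ?_
          rw [abs_mul]
          have h1 : |p i x| ≤ 1 := abs_le.2 ⟨by linarith [hp0 i x], hp1 i x⟩
          have h2 : |Real.log (f (F i x))| ≤ |Real.log ε| + |Real.log C| :=
            abs_log_le hε (hfl _) (hfu _)
          calc |p i x| * |Real.log (f (F i x))| ≤ 1 * (|Real.log ε| + |Real.log C|) :=
                mul_le_mul h1 h2 (abs_nonneg _) zero_le_one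
            _ = _ := one_mul _
      _ = (k : ℝ) * (|Real.log ε| + |Real.log C|) := by
          simp [Finset.sum_const, Finset.card_univ, nsmul_eq_mul, mul_add]
  have intG : Integrable G ν := integ_of_bdd ν hGm hGb
  have hGA : ∫ x, G x ∂ν ≤ ∫ x, A x ∂ν := by
    refine integral_mono intG intA fun x => ?_
    exact jensen_log (fun i => hp0 i x) (fun i => hp1 i x) (hpsum x)
      (fun i => fpos (F i x))
  have hGB : ∫ x, G x ∂ν = ∫ x, B x ∂ν := by
    have h1 : ∫ x, G x ∂ν = ∑ i, ∫ x, p i x * Real.log (f (F i x)) ∂ν := by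
      simp only [hG]
      exact integral_finset_sum Finset.univ (fun i _ => integ_of_bdd ν
      ((hpm i).mul (hfm.comp (hF i)).log)
      (c := |Real.log ε| + |Real.log C|) (fun x => by
        rw [abs_mul]
        have h1 : |p i x| ≤ 1 := abs_le.2 ⟨by linarith [hp0 i x], hp1 i x⟩
        have h2 : |Real.log (f (F i x))| ≤ |Real.log ε| + |Real.log C| :=
          abs_log_le hε (hfl _) (hfu _)
        calc |p i x| * |Real.log (f (F i x))| ≤ 1 * (|Real.log ε| + |Real.log C|) :=
              mul_le_mul h1 h2 (abs_nonneg _) zero_le_one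
          _ = _ := one_mul _))
    rw [h1]
    exact (invariance F hF p hpm hp0 hp1 ν hinv hBm hBb).symm
  linarith

end aux

/-- The set of candidate values `∫ log( (Σᵢ f∘Fᵢ) / f ) dν` over bounded positive
measurable functions `f`, whose infimum defines the entropy `h₀(ν)`. -/
noncomputable def entropyCandidates {M : Type*} [MeasurableSpace M] {k : ℕ}
    (F : Fin k → M → M) (ν : Measure M) : Set ℝ :=
  {r | ∃ f : M → ℝ, Measurable f ∧ (∀ x, 0 < f x) ∧ (∃ C, ∀ x, f x ≤ C) ∧
    r = ∫ x, Real.log ((∑ i, f (F i x)) / f x) ∂ν}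

theorem stmt_12 {M : Type*} [MetricSpace M] [CompactSpace M]
    [MeasurableSpace M] [BorelSpace M] {k : ℕ}
    (F : Fin k → M → M) (hF : ∀ i, Continuous (F i))
    (p : Fin k → M → ℝ) (hpm : ∀ i, Measurable (p i))
    (hp0 : ∀ i x, 0 ≤ p i x) (hp1 : ∀ i x, p i x ≤ 1)
    (hpsum : ∀ x, ∑ i, p i x = 1)
    (ν : Measure M) [IsProbabilityMeasure ν]
    (hinv : ∀ B : Set M, MeasurableSet B →
      (ν B).toReal = ∑ i, ∫ x in (F i) ⁻¹' B, p i x ∂ν) :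
    0 ≤ sInf (entropyCandidates F ν) ∧ sInf (entropyCandidates F ν) ≤ Real.log k := by
  have hne : Nonempty M := by
    by_contra hcon
    have h1 := measure_univ (μ := ν)
    rw [Set.univ_eq_empty_iff.2 (not_nonempty_iff.1 hcon), measure_empty] at h1
    exact zero_ne_one h1
  obtain ⟨x0⟩ := hne
  have hk : 0 < k := by
    rcases Nat.eq_zero_or_pos k with hzero | h
    · exfalso; have h2 := hpsum x0; subst hzero; simp at h2
    · exact h
  haveI hfin : Nonempty (Fin k) := ⟨⟨0, hk⟩⟩
  have hkR : (0:ℝ) < (k:ℝ) := by exact_mod_cast hk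
  have hFm : ∀ i, Measurable (F i) := fun i => (hF i).measurable
  have hlow : ∀ r ∈ entropyCandidates F ν, 0 ≤ r := by
    rintro r ⟨f, hfm, hfpos, ⟨C, hfC⟩, rfl⟩
    by_cases hint : Integrable (fun x => Real.log ((∑ i, f (F i x)) / f x)) ν
    swap
    · rw [integral_undef hint]
    set h : M → ℝ := fun x => Real.log ((∑ i, f (F i x)) / f x) with hh
    set δ : ℕ → ℝ := fun n => 1 / ((n:ℝ) + 1) with hδdef
    have hδpos : ∀ n, 0 < δ n := fun n => by
      rw [hδdef]; positivity
    set Fn : ℕ → M → ℝ := fun n x =>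
      Real.log ((∑ i, (f (F i x) + δ n)) / (f x + δ n)) with hFn
    have hspos : ∀ x, 0 < ∑ i, f (F i x) :=
      fun x => Finset.sum_pos (fun i _ => hfpos _) Finset.univ_nonempty
    have hsum : ∀ n x, ∑ i, (f (F i x) + δ n) = (∑ i, f (F i x)) + (k:ℝ) * δ n := by
      intro n x
      rw [Finset.sum_add_distrib]
      simp [Finset.sum_const, Finset.card_univ, nsmul_eq_mul]
    have hnn : ∀ n, 0 ≤ ∫ x, Fn n x ∂ν := by
      intro n
      exact key_nonneg hk F hFm p hpm hp0 hp1 hpsum ν hinv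
        (hfm.add measurable_const) (hδpos n)
        (fun x => le_add_of_nonneg_left (hfpos x).le)
        (C := C + δ n) (fun x => by have := hfC x; show f x + δ n ≤ C + δ n; linarith)
    have hFnm : ∀ n, AEStronglyMeasurable (Fn n) ν := fun n =>
      (((Finset.measurable_sum Finset.univ
          (fun i _ => (hfm.comp (hFm i)).add measurable_const)).div
        (hfm.add measurable_const)).log).aestronglyMeasurable
    set bound : M → ℝ := fun x => |h x| + |Real.log (k:ℝ)| with hbound
    have bound_int : Integrable bound ν := hint.abs.add (integrable_const _)
    have h_bound : ∀ n, ∀ᵐ x ∂ν, ‖Fn n x‖ ≤ bound x := by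
      intro n
      refine Eventually.of_forall fun x => ?_
      rw [Real.norm_eq_abs]
      have ha : 0 < ∑ i, f (F i x) := hspos x
      have hb : 0 < f x := hfpos x
      have hd : 0 < δ n := hδpos n
      set a := ∑ i, f (F i x) with hadef
      set b := f x with hbdef
      have hFnx : Fn n x = Real.log ((a + (k:ℝ) * δ n) / (b + δ n)) := by
        simp only [hFn]
        rw [hsum n x]
      have hhx : h x = Real.log (a / b) := rfl
      set v := (a + (k:ℝ) * δ n) / (b + δ n) with hvdef
      have hbd : 0 < b + δ n := by linarith
      have habk : 0 < a / b := div_pos ha hb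
      have hvmax : v ≤ max (a / b) (k:ℝ) := by
        rw [hvdef, div_le_iff₀ hbd]
        have h1 : a ≤ max (a / b) (k:ℝ) * b := by
          calc a = (a / b) * b := (div_mul_cancel₀ a hb.ne').symm
            _ ≤ max (a / b) (k:ℝ) * b :=
                mul_le_mul_of_nonneg_right (le_max_left _ _) hb.le
        have h2 : (k:ℝ) * δ n ≤ max (a / b) (k:ℝ) * δ n :=
          mul_le_mul_of_nonneg_right (le_max_right _ _) hd.le
        calc a + (k:ℝ) * δ n ≤ max (a / b) (k:ℝ) * b + max (a / b) (k:ℝ) * δ n :=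
              add_le_add h1 h2
          _ = max (a / b) (k:ℝ) * (b + δ n) := (mul_add _ _ _).symm
      have hvmin : min (a / b) (k:ℝ) ≤ v := by
        rw [hvdef, le_div_iff₀ hbd]
        have h1 : min (a / b) (k:ℝ) * b ≤ a := by
          calc min (a / b) (k:ℝ) * b ≤ (a / b) * b :=
                mul_le_mul_of_nonneg_right (min_le_left _ _) hb.le
            _ = a := div_mul_cancel₀ a hb.ne'
        have h2 : min (a / b) (k:ℝ) * δ n ≤ (k:ℝ) * δ n :=
          mul_le_mul_of_nonneg_right (min_le_right _ _) hd.le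
        calc min (a / b) (k:ℝ) * (b + δ n)
            = min (a / b) (k:ℝ) * b + min (a / b) (k:ℝ) * δ n := mul_add _ _ _
          _ ≤ a + (k:ℝ) * δ n := add_le_add h1 h2
      have hminpos : 0 < min (a / b) (k:ℝ) := lt_min habk hkR
      have hvpos : 0 < v := lt_of_lt_of_le hminpos hvmin
      have hmax : Real.log (max (a / b) (k:ℝ)) ≤ max (Real.log (a / b)) (Real.log (k:ℝ)) := by
        rcases le_total (a / b) (k:ℝ) with hc | hc
        · rw [max_eq_right hc]; exact le_max_right _ _
        · rw [max_eq_left hc]; exact le_max_left _ _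
      have hmin : min (Real.log (a / b)) (Real.log (k:ℝ)) ≤ Real.log (min (a / b) (k:ℝ)) := by
        rcases le_total (a / b) (k:ℝ) with hc | hc
        · rw [min_eq_left hc]; exact min_le_left _ _
        · rw [min_eq_right hc]; exact min_le_right _ _
      have hup : Real.log v ≤ max (Real.log (a / b)) (Real.log (k:ℝ)) :=
        (Real.log_le_log hvpos hvmax).trans hmax
      have hlo : min (Real.log (a / b)) (Real.log (k:ℝ)) ≤ Real.log v :=
        hmin.trans (Real.log_le_log hminpos hvmin)
      rw [hFnx]
      simp only [hbound]
      rw [abs_le]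
      constructor
      · have e1 : -(|h x| + |Real.log (k:ℝ)|) ≤ Real.log (a / b) := by
          have := neg_abs_le (h x); rw [hhx] at this
          have h3 := abs_nonneg (Real.log (k:ℝ)); linarith
        have e2 : -(|h x| + |Real.log (k:ℝ)|) ≤ Real.log (k:ℝ) := by
          have := neg_abs_le (Real.log (k:ℝ))
          have h3 := abs_nonneg (h x); linarith
        exact le_trans (le_min e1 e2) hlo
      · refine hup.trans (max_le ?_ ?_)
        · have := le_abs_self (Real.log (a / b)); rw [← hhx] at this ⊢
          have h3 := abs_nonneg (Real.log (k:ℝ)); linarith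
        · have := le_abs_self (Real.log (k:ℝ))
          have h3 := abs_nonneg (h x); linarith
    have h_lim : ∀ᵐ x ∂ν, Filter.Tendsto (fun n => Fn n x) atTop (nhds (h x)) := by
      refine Eventually.of_forall fun x => ?_
      have ha : 0 < ∑ i, f (F i x) := hspos x
      have hb : 0 < f x := hfpos x
      set a := ∑ i, f (F i x) with hadef
      set b := f x with hbdef
      have heq : (fun n => Fn n x)
          = fun n => Real.log ((a + (k:ℝ) * δ n) / (b + δ n)) := by
        funext n
        simp only [hFn]
        rw [hsum n x]
      have hδ0 : Filter.Tendsto δ atTop (nhds 0) := tendsto_one_div_add_atTop_nhds_zero_nat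
      have hq : Filter.Tendsto (fun n => (a + (k:ℝ) * δ n) / (b + δ n)) atTop
          (nhds (a / b)) := by
        have h1 : Filter.Tendsto (fun n => a + (k:ℝ) * δ n) atTop (nhds (a + (k:ℝ) * 0)) :=
          tendsto_const_nhds.add (hδ0.const_mul _)
        have h2 : Filter.Tendsto (fun n => b + δ n) atTop (nhds (b + 0)) :=
          tendsto_const_nhds.add hδ0
        rw [mul_zero, add_zero] at h1
        rw [add_zero] at h2
        exact h1.div h2 hb.ne'
      have hhx : h x = Real.log (a / b) := rfl
      rw [heq, hhx]
      exact (Real.continuousAt_log (div_pos ha hb).ne').tendsto.comp hq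
    have hTend := tendsto_integral_of_dominated_convergence bound hFnm bound_int h_bound h_lim
    exact ge_of_tendsto' hTend hnn
  have hmem : Real.log (k:ℝ) ∈ entropyCandidates F ν := by
    refine ⟨fun _ => 1, measurable_const, fun _ => one_pos, ⟨1, fun _ => le_refl 1⟩, ?_⟩
    simp [Finset.sum_const, Finset.card_univ, nsmul_eq_mul, integral_const, measure_univ]
  exact ⟨le_csInf ⟨_, hmem⟩ hlow, csInf_le ⟨0, fun r hr => hlow r hr⟩ hmem⟩
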